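/- Let d ≥ 1, let P be a finite nonempty subset of ℝ^d satisfying Condition 1, let ε ∈ (0,1), and let Q ⊆ P be an ε-regret set of P. Then |Q| ≥ d + 1. Equivalently, any subset of P of size at most d has maximum regret ratio at least 1 over P. -/

import Mathlib

open scoped RealInnerProductSpace

/-- If `P` satisfies Condition 1, `ε ∈ (0,1)`, and `Q ⊆ P` is an
`ε`-regret set of `P` (for every unit `x` some `q ∈ Q` has
`⟪q,x⟫ ≥ (1−ε)·ω(x,P)`), then `|Q| ≥ d + 1`. -/
theorem stmt11 (d : ℕ) (hd : 1 ≤ d)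
    (P : Finset (EuclideanSpace ℝ (Fin d))) (hP : P.Nonempty)
    (cond1 : ∀ x : EuclideanSpace ℝ (Fin d), ‖x‖ = 1 →
      0 < P.sup' hP (fun t => ⟪t, x⟫))
    (ε : ℝ) (hε : ε ∈ Set.Ioo (0 : ℝ) 1)
    (Q : Finset (EuclideanSpace ℝ (Fin d))) (hQP : Q ⊆ P)
    (hreg : ∀ x : EuclideanSpace ℝ (Fin d), ‖x‖ = 1 →
      ∃ q ∈ Q, (1 - ε) * P.sup' hP (fun t => ⟪t, x⟫) ≤ ⟪q, x⟫) :
    d + 1 ≤ Q.card := by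
  by_contra h
  push_neg at h
  have hcard : Q.card ≤ d := Nat.lt_succ_iff.mp h
  have hfr : Module.finrank ℝ (EuclideanSpace ℝ (Fin d)) = d := finrank_euclideanSpace_fin
  obtain ⟨u, hu, hneg⟩ : ∃ u : EuclideanSpace ℝ (Fin d), ‖u‖ = 1 ∧ ∀ q ∈ Q, ⟪q, u⟫ ≤ 0 := by
    by_cases hspan : Submodule.span ℝ (Q : Set (EuclideanSpace ℝ (Fin d))) = ⊤
    · -- Q spans, card ≤ d, so Q is a basis; find u with all inner products negative
      have hle : d ≤ Q.card := by
        have := finrank_span_le_card (R := ℝ) (Q : Set (EuclideanSpace ℝ (Fin d)))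
        rw [hspan] at this
        simpa [finrank_top, hfr] using this
      have hcardeq : Fintype.card {x // x ∈ Q} = Module.finrank ℝ (EuclideanSpace ℝ (Fin d)) := by
        rw [Fintype.card_coe, hfr]; omega
      let B := basisOfTopLeSpanOfCardEqFinrank
        (fun q : {x // x ∈ Q} => (q : EuclideanSpace ℝ (Fin d)))
        (by rw [← hspan]; exact Submodule.span_le.mpr (by simp only [Subtype.range_coe_subtype, Finset.setOf_mem]; exact Submodule.subset_span)) hcardeq
      have hB : ∀ i, B i = (i : EuclideanSpace ℝ (Fin d)) :=
        fun i => by simp [B, coe_basisOfTopLeSpanOfCardEqFinrank]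
      let f : EuclideanSpace ℝ (Fin d) →ₗ[ℝ] ℝ := ∑ i : {x // x ∈ Q}, B.coord i
      have hf : ∀ q : EuclideanSpace ℝ (Fin d), ∀ hq : q ∈ Q, f q = 1 := by
        intro q hq
        have : f (B ⟨q, hq⟩) = 1 := by
          simp only [f, LinearMap.sum_apply, Module.Basis.coord_apply, Module.Basis.repr_self]
          rw [Finset.sum_eq_single (⟨q, hq⟩ : {x // x ∈ Q})]
          · simp
          · intro b _ hb
            exact Finsupp.single_eq_of_ne' (Ne.symm hb)
          · intro habs
            exact absurd (Finset.mem_attach _ _) habs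
        rwa [hB ⟨q, hq⟩] at this
      let x : EuclideanSpace ℝ (Fin d) := (InnerProductSpace.toDual ℝ (EuclideanSpace ℝ (Fin d))).symm (LinearMap.toContinuousLinearMap f)
      have hx : ∀ q : EuclideanSpace ℝ (Fin d), q ∈ Q → ⟪x, q⟫ = 1 := by
        intro q hq
        rw [InnerProductSpace.toDual_symm_apply]
        exact hf q hq
      have hQne : Q.Nonempty := Finset.card_pos.mp (by omega)
      obtain ⟨q0, hq0⟩ := hQne
      have hxne : x ≠ 0 := by
        intro h0
        have := hx q0 hq0
        rw [h0] at this
        simp at this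
      refine ⟨-(‖x‖⁻¹ • x), ?_, ?_⟩
      · rw [norm_neg, norm_smul, norm_inv, norm_norm,
          inv_mul_cancel₀ (norm_ne_zero_iff.mpr hxne)]
      · intro q hq
        rw [inner_neg_right, real_inner_smul_right, real_inner_comm, hx q hq]
        have : (0:ℝ) < ‖x‖⁻¹ := inv_pos.mpr (norm_pos_iff.mpr hxne)
        linarith
    · -- Q does not span; take a unit vector orthogonal to span Q
      have hbot : (Submodule.span ℝ (Q : Set (EuclideanSpace ℝ (Fin d))))ᗮ ≠ ⊥ := by
        simp only [ne_eq, Submodule.orthogonal_eq_bot_iff]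
        exact hspan
      obtain ⟨x, hxmem, hxne⟩ := Submodule.exists_mem_ne_zero_of_ne_bot hbot
      refine ⟨‖x‖⁻¹ • x, ?_, ?_⟩
      · rw [norm_smul, norm_inv, norm_norm,
          inv_mul_cancel₀ (norm_ne_zero_iff.mpr hxne)]
      · intro q hq
        have : ⟪q, x⟫ = 0 :=
          (Submodule.mem_orthogonal _ _).mp hxmem q (Submodule.subset_span hq)
        rw [real_inner_smul_right, this, mul_zero]
  obtain ⟨q, hqQ, hq⟩ := hreg u hu
  have hω := cond1 u hu
  have h1 : 0 < 1 - ε := by linarith [hε.2]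
  nlinarith [hneg q hqQ]
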